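/- Let D be the locally nilpotent ℂ-derivation of ℂ[X, Y, Z] given by D = −2Yσ·∂/∂X + Zσ·∂/∂Y with σ = XZ + Y², and let N = (exp(D)(X), exp(D)(Y), exp(D)(Z)) be the associated exponential automorphism of ℂ³ (the Nagata automorphism N = (X − 2Yσ − Zσ², Y + Zσ, Z)). Then the minimal polynomial of N is (T − 1)³: for each variable w ∈ {X, Y, Z}, Σ_{m=0}^{3} (−1)^m C(3,m) exp(mD)(w) = 0, and no nonzero polynomial p ∈ ℂ[T] of degree less than 3 satisfies Σ_m (coeff of T^m in p)·exp(mD)(w) = 0 for all w ∈ {X, Y, Z}. -/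

import Mathlib

open Classical in
/-- The exponential `exp(D)(a) = Σ_{i=0}^{∞} (1/i!) • D^[i](a)` of a derivation `D`;
for each `a` on which `D` is eventually nilpotent this is the (finite) sum of all
possibly nonzero terms. -/
noncomputable def expMap (k : Type*) {A : Type*} [Field k] [CharZero k] [CommRing A]
    [Algebra k A] (D : Derivation k A A) (a : A) : A :=
  if h : ∃ n : ℕ, (⇑D)^[n] a = 0 then
    ∑ i ∈ Finset.range (Nat.find h), ((Nat.factorial i : k)⁻¹) • (⇑D)^[i] a
  else a

open Classical in
lemma expMap_eq {k : Type*} {A : Type*} [Field k] [CharZero k] [CommRing A]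
    [Algebra k A] (D : Derivation k A A) (a : A) (n : ℕ) (hn : (⇑D)^[n] a = 0) :
    expMap k D a = ∑ i ∈ Finset.range n, ((Nat.factorial i : k)⁻¹) • (⇑D)^[i] a := by
  have h : ∃ n : ℕ, (⇑D)^[n] a = 0 := ⟨n, hn⟩
  rw [expMap, dif_pos h]
  refine Finset.sum_subset (Finset.range_subset_range.2 (Nat.find_min' h hn)) ?_
  intro i _ hi
  simp only [Finset.mem_range, not_lt] at hi
  have : (⇑D)^[i] a = 0 := by
    have := Nat.find_spec h
    rw [← Nat.sub_add_cancel hi, Function.iterate_add_apply, this,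
      Function.iterate_fixed (map_zero D)]
  simp [this]

open MvPolynomial in
/-- The minimal polynomial of the Nagata automorphism `N = exp(D)` of `ℂ³`, where
`D = −2Yσ ∂/∂X + Zσ ∂/∂Y` with `σ = XZ + Y²`, is `(T − 1)³`: the alternating sum
`Σ_{m=0}^{3} (−1)^m C(3,m) exp(mD)(w)` vanishes on each variable `w`, while no
nonzero polynomial of degree `< 3` annihilates `N`. -/
theorem nagata_minimal_polynomial
    (D : Derivation ℂ (MvPolynomial (Fin 3) ℂ) (MvPolynomial (Fin 3) ℂ))
    (σ : MvPolynomial (Fin 3) ℂ) (hσ : σ = X 0 * X 2 + X 1 ^ 2)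
    (hX : D (X 0) = -2 * X 1 * σ)
    (hY : D (X 1) = X 2 * σ)
    (hZ : D (X 2) = 0)
    (hD : ∀ a : MvPolynomial (Fin 3) ℂ, ∃ n : ℕ, (⇑D)^[n] a = 0) :
    (∀ i : Fin 3,
        ∑ m ∈ Finset.range 4,
          ((-1 : ℂ) ^ m * (Nat.choose 3 m : ℂ)) • expMap ℂ (m • D) (X i) = 0) ∧
      ∀ p : Polynomial ℂ, p ≠ 0 → p.natDegree < 3 →
        ∃ i : Fin 3,
          ∑ m ∈ Finset.range (p.natDegree + 1),
            p.coeff m • expMap ℂ (m • D) (X i) ≠ 0 := by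
  have hC : ∀ (c : ℂ) (p : MvPolynomial (Fin 3) ℂ), c • p = C c * p :=
    fun c p => MvPolynomial.smul_eq_C_mul p c
  have hσ0 : D σ = 0 := by
    rw [hσ]
    simp only [map_add, Derivation.leibniz, Derivation.leibniz_pow, hX, hY, hZ,
      smul_eq_mul, nsmul_eq_mul]
    ring
  have hX' : D (X 0) = (-2 : ℂ) • (X 1 * σ) := by
    rw [hX, hC, map_neg, map_ofNat]; ring
  have hDXσ : D (X 1 * σ) = X 2 * σ^2 := by
    rw [Derivation.leibniz, hY, hσ0, smul_eq_mul, smul_eq_mul]; ring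
  have hDXσ2 : D (X 2 * σ^2) = 0 := by
    rw [Derivation.leibniz, Derivation.leibniz_pow, hZ, hσ0]; simp
  have hsm : ∀ (m : ℕ) (a : MvPolynomial (Fin 3) ℂ), (m • D) a = (m : ℂ) • D a := by
    intro m a
    show m • D a = _
    rw [← Nat.cast_smul_eq_nsmul ℂ]
  -- iterates
  have e1 : ∀ m : ℕ, (⇑(m • D))^[1] (X 2) = 0 := fun m => by simp [hsm, hZ]
  have e2 : ∀ m : ℕ, (⇑(m • D))^[1] (X 1) = (m : ℂ) • (X 2 * σ) := fun m => by
    simp only [Function.iterate_one, hsm, hY]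
  have e3 : ∀ m : ℕ, (⇑(m • D))^[2] (X 1) = 0 := fun m => by
    rw [Function.iterate_succ_apply', e2, hsm, D.map_smul, Derivation.leibniz, hZ, hσ0]
    simp
  have e4 : ∀ m : ℕ, (⇑(m • D))^[1] (X 0) = ((m : ℂ) * (-2)) • (X 1 * σ) := fun m => by
    simp only [Function.iterate_one, hsm, hX', smul_smul]
  have e5 : ∀ m : ℕ, (⇑(m • D))^[2] (X 0) = ((m:ℂ)^2 * (-2)) • (X 2 * σ^2) := fun m => by
    rw [Function.iterate_succ_apply', e4, hsm, D.map_smul, hDXσ, smul_smul]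
    ring_nf
  have e6 : ∀ m : ℕ, (⇑(m • D))^[3] (X 0) = 0 := fun m => by
    rw [Function.iterate_succ_apply', e5, hsm, D.map_smul, hDXσ2]
    simp
  -- exp formulas
  have E2 : ∀ m : ℕ, expMap ℂ (m • D) (X 2) = X 2 := by
    intro m
    rw [expMap_eq (m • D) (X 2) 1 (e1 m)]
    simp
  have E1 : ∀ m : ℕ, expMap ℂ (m • D) (X 1) = X 1 + (m : ℂ) • (X 2 * σ) := by
    intro m
    rw [expMap_eq (m • D) (X 1) 2 (e3 m)]
    rw [Finset.sum_range_succ, Finset.sum_range_one, e2 m]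
    simp [Nat.factorial]
  have E0 : ∀ m : ℕ, expMap ℂ (m • D) (X 0) =
      X 0 + ((m : ℂ) * (-2)) • (X 1 * σ) + (-(m:ℂ)^2) • (X 2 * σ^2) := by
    intro m
    rw [expMap_eq (m • D) (X 0) 3 (e6 m)]
    rw [Finset.sum_range_succ, Finset.sum_range_succ, Finset.sum_range_one, e4 m, e5 m]
    simp only [Function.iterate_zero, id_eq, Nat.factorial, Nat.factorial_zero,
      Nat.cast_one, inv_one, one_smul, smul_smul]
    norm_num
    ring_nf
  have s0 : ∑ m ∈ Finset.range 4,
      ((-1 : ℂ) ^ m * (Nat.choose 3 m : ℂ)) • expMap ℂ (m • D) (X 0) = 0 := by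
    simp only [Finset.sum_range_succ, Finset.sum_range_zero, E0]
    norm_num [Nat.choose]
    all_goals module
  have s1 : ∑ m ∈ Finset.range 4,
      ((-1 : ℂ) ^ m * (Nat.choose 3 m : ℂ)) • expMap ℂ (m • D) (X 1) = 0 := by
    simp only [Finset.sum_range_succ, Finset.sum_range_zero, E1]
    norm_num [Nat.choose]
    all_goals module
  have s2 : ∑ m ∈ Finset.range 4,
      ((-1 : ℂ) ^ m * (Nat.choose 3 m : ℂ)) • expMap ℂ (m • D) (X 2) = 0 := by
    simp only [Finset.sum_range_succ, Finset.sum_range_zero, E2]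
    norm_num [Nat.choose]
    all_goals module
  constructor
  · intro i
    fin_cases i
    · exact s0
    · exact s1
    · exact s2
  · intro p hp hdeg
    by_contra hcon
    push_neg at hcon
    have hlead : p.coeff p.natDegree ≠ 0 := Polynomial.leadingCoeff_ne_zero.mpr hp
    -- evaluate at the all-ones point
    set ev : MvPolynomial (Fin 3) ℂ →+* ℂ := eval (fun _ => (1:ℂ)) with hev
    have hevσ : ev σ = 2 := by rw [hσ]; simp [hev]; norm_num
    have hv2 : ∀ m : ℕ, ev (expMap ℂ (m • D) (X 2)) = 1 := by
      intro m; rw [E2]; simp [hev]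
    have hv1 : ∀ m : ℕ, ev (expMap ℂ (m • D) (X 1)) = 1 + 2*m := by
      intro m; rw [E1]
      simp [hev, hC, hevσ]
      rw [← hev, hevσ]
      ring
    have hv0 : ∀ m : ℕ, ev (expMap ℂ (m • D) (X 0)) = 1 - 4*m - 4*m^2 := by
      intro m; rw [E0]
      simp [hev, hC, hevσ]
      rw [← hev, hevσ]
      ring
    have key : ∀ i : Fin 3,
        ∑ m ∈ Finset.range (p.natDegree + 1), p.coeff m * ev (expMap ℂ (m • D) (X i)) = 0 := by
      intro i
      have := congrArg ev (hcon i)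
      rw [map_sum, map_zero] at this
      rw [← this]
      refine Finset.sum_congr rfl fun m _ => ?_
      rw [hC, map_mul, eval_C]
    have hd3 : p.natDegree = 0 ∨ p.natDegree = 1 ∨ p.natDegree = 2 := by omega
    rcases hd3 with hd | hd | hd <;> rw [hd] at key
    · have k2 := key 2
      simp only [Finset.sum_range_succ, Finset.sum_range_zero, hv2] at k2
      exact hlead (by rw [hd]; linear_combination k2)
    · have k2 := key 2
      have k1 := key 1
      simp only [Finset.sum_range_succ, Finset.sum_range_zero, hv2, hv1] at k2 k1
      push_cast at k1
      exact hlead (by rw [hd]; linear_combination (k1 - k2) / 2)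
    · have k2 := key 2
      have k1 := key 1
      have k0 := key 0
      simp only [Finset.sum_range_succ, Finset.sum_range_zero, hv2, hv1, hv0] at k2 k1 k0
      push_cast at k1 k0
      exact hlead (by rw [hd]; linear_combination (k2 - k0)/8 - (k1 - k2)/2)
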